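/- Let (X, d) be a metric space with a Borel measure μ, fix a basepoint o ∈ X, write r(x) = d(x, o) and B_R = {x ∈ X : r(x) < R}. Let W : X → [0, ∞) be measurable, and let A ∈ ℝ, k ≥ 0, λ ≥ 0, τ > 0, C > 0, R₁ > 1 be constants such that for every R ≥ R₁ one has ∫_{B_R \ B_{R/2}} W dμ ≤ C R^{A} (log R)^{k} e^{−λ (log R)^{τ}}. Then there exist constants C' > 0 and R₂ > 1 such that for every R ≥ R₂ and every nonincreasing function f : (0, ∞) → [0, ∞) one has ∫_{X \ B_R} f(r(x)) W(x) dμ(x) ≤ C' ∫_{R/2}^{∞} f(r) r^{A−1} (log r)^{k} e^{−λ (log r)^{τ}} dr. -/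

import Mathlib

open MeasureTheory Real RealInnerProductSpace Classical ENNReal

/-- Key pointwise comparison on a dyadic interval. -/
lemma annuli_key_ineq (A k lam τ C : ℝ) (hk : 0 ≤ k) (hlam : 0 ≤ lam) (hτ : 0 < τ)
    (hC : 0 ≤ C) (S r : ℝ) (hS : 16 ≤ S) (hr1 : S / 2 < r) (hr2 : r ≤ S) :
    4 * C * (2 * S) ^ (A - 1) * Real.log (2 * S) ^ k *
        Real.exp (-lam * Real.log (2 * S) ^ τ) ≤
      (4 * C * (4 : ℝ) ^ |A - 1| * (2 : ℝ) ^ k) * r ^ (A - 1) * Real.log r ^ k *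
        Real.exp (-lam * Real.log r ^ τ) := by
  have hrpos : (0 : ℝ) < r := by linarith
  have hr8 : (8 : ℝ) ≤ r := by linarith
  have h2Spos : (0 : ℝ) < 2 * S := by linarith
  have hlogr : (0 : ℝ) < Real.log r := Real.log_pos (by linarith)
  have hlog2S : (0 : ℝ) ≤ Real.log (2 * S) := Real.log_nonneg (by linarith)
  -- (i)
  have hi : (2 * S) ^ (A - 1) ≤ (4 : ℝ) ^ |A - 1| * r ^ (A - 1) := by
    have ht1 : 1 ≤ 2 * S / r := by rw [le_div_iff₀ hrpos]; linarith
    have ht4 : 2 * S / r ≤ 4 := by rw [div_le_iff₀ hrpos]; linarith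
    have heq : (2 * S) ^ (A - 1) = (2 * S / r) ^ (A - 1) * r ^ (A - 1) := by
      rw [← Real.mul_rpow (by linarith) hrpos.le, div_mul_cancel₀ _ (ne_of_gt hrpos)]
    rw [heq]
    apply mul_le_mul_of_nonneg_right _ (Real.rpow_nonneg hrpos.le _)
    rcases le_or_gt 0 (A - 1) with h | h
    · rw [abs_of_nonneg h]
      exact Real.rpow_le_rpow (by linarith) ht4 h
    · calc (2 * S / r) ^ (A - 1) ≤ 1 :=
            Real.rpow_le_one_of_one_le_of_nonpos ht1 h.le
        _ ≤ (4 : ℝ) ^ |A - 1| := by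
            calc (1 : ℝ) = (4 : ℝ) ^ (0 : ℝ) := (Real.rpow_zero 4).symm
              _ ≤ (4 : ℝ) ^ |A - 1| :=
                  Real.rpow_le_rpow_of_exponent_le (by norm_num) (abs_nonneg _)
  -- (ii)
  have hlog_le : Real.log (2 * S) ≤ 2 * Real.log r := by
    have h1 : Real.log (2 * S) = Real.log 4 + Real.log (S / 2) := by
      rw [← Real.log_mul (by norm_num) (by positivity)]
      ring_nf
    have h2 : Real.log 4 ≤ Real.log r := Real.log_le_log (by norm_num) (by linarith)
    have h3 : Real.log (S / 2) ≤ Real.log r := Real.log_le_log (by linarith) (by linarith)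
    linarith
  have hii : Real.log (2 * S) ^ k ≤ (2 : ℝ) ^ k * Real.log r ^ k := by
    calc Real.log (2 * S) ^ k ≤ (2 * Real.log r) ^ k :=
          Real.rpow_le_rpow hlog2S hlog_le hk
      _ = (2 : ℝ) ^ k * Real.log r ^ k := Real.mul_rpow (by norm_num) hlogr.le
  -- (iii)
  have hiii : Real.exp (-lam * Real.log (2 * S) ^ τ) ≤
      Real.exp (-lam * Real.log r ^ τ) := by
    apply Real.exp_le_exp.2
    have hlog2 : Real.log r ≤ Real.log (2 * S) := Real.log_le_log hrpos (by linarith)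
    have h3 : Real.log r ^ τ ≤ Real.log (2 * S) ^ τ :=
      Real.rpow_le_rpow hlogr.le hlog2 hτ.le
    nlinarith
  calc 4 * C * (2 * S) ^ (A - 1) * Real.log (2 * S) ^ k *
        Real.exp (-lam * Real.log (2 * S) ^ τ)
      ≤ 4 * C * ((4 : ℝ) ^ |A - 1| * r ^ (A - 1)) * ((2 : ℝ) ^ k * Real.log r ^ k) *
        Real.exp (-lam * Real.log r ^ τ) := by
        gcongr
    _ = (4 * C * (4 : ℝ) ^ |A - 1| * (2 : ℝ) ^ k) * r ^ (A - 1) * Real.log r ^ k *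
        Real.exp (-lam * Real.log r ^ τ) := by ring

/-- The annulus-decomposition estimate (formula (2.19)): a weighted volume growth bound on
dyadic annuli implies an integral estimate on exteriors of balls against any nonincreasing
weight `f`. -/
theorem annuli_integral_estimate
    {X : Type*} [MetricSpace X] [MeasurableSpace X] [BorelSpace X]
    (μ : Measure X) (o : X)
    (W : X → ℝ) (hW_meas : Measurable W) (hW_nonneg : ∀ x, 0 ≤ W x)
    (A k lam τ C R₁ : ℝ) (hk : 0 ≤ k) (hlam : 0 ≤ lam) (hτ : 0 < τ) (hC : 0 < C)
    (hR₁ : 1 < R₁)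
    (hvol : ∀ R, R₁ ≤ R →
      ∫⁻ x in Metric.ball o R \ Metric.ball o (R / 2), ENNReal.ofReal (W x) ∂μ ≤
        ENNReal.ofReal (C * R ^ A * Real.log R ^ k * Real.exp (-lam * Real.log R ^ τ))) :
    ∃ C' : ℝ, 0 < C' ∧ ∃ R₂ : ℝ, 1 < R₂ ∧
      ∀ R, R₂ ≤ R → ∀ f : ℝ → ℝ, (∀ r, 0 ≤ f r) → AntitoneOn f (Set.Ioi 0) →
        ∫⁻ x in (Metric.ball o R)ᶜ, ENNReal.ofReal (f (dist x o) * W x) ∂μ ≤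
          ∫⁻ r in Set.Ioi (R / 2),
            ENNReal.ofReal (C' * f r * r ^ (A - 1) * Real.log r ^ k *
              Real.exp (-lam * Real.log r ^ τ)) := by
  refine ⟨4 * C * (4 : ℝ) ^ |A - 1| * (2 : ℝ) ^ k, by positivity,
    max R₁ 16, lt_of_lt_of_le (by norm_num : (1:ℝ) < 16) (le_max_right _ _), ?_⟩
  set C' := 4 * C * (4 : ℝ) ^ |A - 1| * (2 : ℝ) ^ k with hC'def
  intro R hR f hf_nonneg hf_anti
  have hR16 : (16 : ℝ) ≤ R := le_trans (le_max_right _ _) hR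
  have hRR₁ : R₁ ≤ R := le_trans (le_max_left _ _) hR
  have hR0 : (0 : ℝ) < R := by linarith
  -- annuli and intervals
  set ann : ℕ → Set X := fun j => Metric.ball o (2 * (2 ^ j * R)) \ Metric.ball o (2 ^ j * R)
    with hanndef
  set I : ℕ → Set ℝ := fun j => Set.Ioc (2 ^ j * R / 2) (2 ^ j * R) with hIdef
  set T : ℕ → ℝ≥0∞ := fun j => ENNReal.ofReal (f (2 ^ j * R) *
    (C * (2 * (2 ^ j * R)) ^ A * Real.log (2 * (2 ^ j * R)) ^ k *
      Real.exp (-lam * Real.log (2 * (2 ^ j * R)) ^ τ))) with hTdef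
  have hSpos : ∀ j : ℕ, (0 : ℝ) < 2 ^ j * R := fun j => by positivity
  have hS16 : ∀ j : ℕ, (16 : ℝ) ≤ 2 ^ j * R := fun j => by
    calc (16 : ℝ) ≤ R := hR16
      _ = 1 * R := (one_mul R).symm
      _ ≤ 2 ^ j * R := by
          have h1 : (1:ℝ) ≤ 2 ^ j := one_le_pow₀ (by norm_num)
          nlinarith
  -- Step 1 : LHS ≤ ∑' T j
  have hsub : (Metric.ball o R)ᶜ ⊆ ⋃ j, ann j := by
    intro x hx
    have hd : R ≤ dist x o := not_lt.1 (by simpa [Metric.mem_ball] using hx)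
    have hP : ∃ n : ℕ, dist x o < 2 * (2 ^ n * R) := by
      obtain ⟨n, hn⟩ := pow_unbounded_of_one_lt (dist x o / R) (by norm_num : (1:ℝ) < 2)
      refine ⟨n, ?_⟩
      have : dist x o < 2 ^ n * R := by
        rw [div_lt_iff₀ hR0] at hn; linarith
      nlinarith [hSpos n]
    refine Set.mem_iUnion.2 ⟨Nat.find hP, Metric.mem_ball.2 (Nat.find_spec hP), ?_⟩
    · simp only [Metric.mem_ball, not_lt]
      rcases Nat.eq_zero_or_pos (Nat.find hP) with h0 | hpos
      · rw [h0]; simpa using hd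
      · obtain ⟨m, hm⟩ := Nat.exists_eq_succ_of_ne_zero (Nat.pos_iff_ne_zero.1 hpos)
        have hmin := Nat.find_min hP (by omega : m < Nat.find hP)
        push_neg at hmin
        rw [hm]
        calc (2:ℝ) ^ (m + 1) * R = 2 * (2 ^ m * R) := by ring
          _ ≤ dist x o := hmin
  have hannbound : ∀ j : ℕ, ∫⁻ x in ann j, ENNReal.ofReal (f (dist x o) * W x) ∂μ ≤ T j := by
    intro j
    set S := (2:ℝ) ^ j * R with hSdef
    have h2SR₁ : R₁ ≤ 2 * S := by
      rw [hSdef]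
      nlinarith [hRR₁, hR0, one_le_pow₀ (by norm_num : (1:ℝ) ≤ 2) (n := j)]
    calc ∫⁻ x in ann j, ENNReal.ofReal (f (dist x o) * W x) ∂μ
        ≤ ∫⁻ x in ann j, ENNReal.ofReal (f S) * ENNReal.ofReal (W x) ∂μ := by
          apply setLIntegral_mono (measurable_const.mul hW_meas.ennreal_ofReal)
          intro x hx
          have hdist : S ≤ dist x o := by
            have := hx.2
            simp only [Metric.mem_ball, not_lt] at this
            exact this
          have hfd : f (dist x o) ≤ f S :=
            hf_anti (Set.mem_Ioi.2 (hSpos j)) (Set.mem_Ioi.2 (lt_of_lt_of_le (hSpos j) hdist))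
              hdist
          show ENNReal.ofReal (f (dist x o) * W x) ≤ ENNReal.ofReal (f S) * ENNReal.ofReal (W x)
          rw [← ENNReal.ofReal_mul (hf_nonneg S)]
          exact ENNReal.ofReal_le_ofReal
            (mul_le_mul_of_nonneg_right hfd (hW_nonneg x))
      _ = ENNReal.ofReal (f S) * ∫⁻ x in ann j, ENNReal.ofReal (W x) ∂μ :=
          lintegral_const_mul _ hW_meas.ennreal_ofReal
      _ ≤ ENNReal.ofReal (f S) * ENNReal.ofReal (C * (2 * S) ^ A * Real.log (2 * S) ^ k *
            Real.exp (-lam * Real.log (2 * S) ^ τ)) := by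
          gcongr
          have h := hvol (2 * S) h2SR₁
          rw [show 2 * S / 2 = S by ring] at h
          exact h
      _ = T j := by
          rw [hTdef, ← ENNReal.ofReal_mul (hf_nonneg S)]
  have step1 : ∫⁻ x in (Metric.ball o R)ᶜ, ENNReal.ofReal (f (dist x o) * W x) ∂μ ≤
      ∑' j, T j := by
    calc ∫⁻ x in (Metric.ball o R)ᶜ, ENNReal.ofReal (f (dist x o) * W x) ∂μ
        ≤ ∫⁻ x in ⋃ j, ann j, ENNReal.ofReal (f (dist x o) * W x) ∂μ :=
          lintegral_mono_set hsub
      _ ≤ ∑' j, ∫⁻ x in ann j, ENNReal.ofReal (f (dist x o) * W x) ∂μ :=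
          lintegral_iUnion_le _ _
      _ ≤ ∑' j, T j := ENNReal.tsum_le_tsum hannbound
  -- Step 2 : ∑' T j ≤ RHS
  have hintbound : ∀ j : ℕ, T j ≤ ∫⁻ r in I j,
      ENNReal.ofReal (C' * f r * r ^ (A - 1) * Real.log r ^ k *
        Real.exp (-lam * Real.log r ^ τ)) := by
    intro j
    set S := (2:ℝ) ^ j * R with hSdef
    have h2Spos : (0 : ℝ) < 2 * S := by nlinarith [hSpos j]
    have h2SA : (2 * S) ^ A = (2 * S) ^ (A - 1) * (2 * S) := by
      have := Real.rpow_add_one (ne_of_gt h2Spos) (A - 1)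
      rw [sub_add_cancel] at this
      exact this
    set lb := f S * (4 * C * (2 * S) ^ (A - 1) * Real.log (2 * S) ^ k *
      Real.exp (-lam * Real.log (2 * S) ^ τ)) with hlbdef
    have hlbnonneg : 0 ≤ lb := by
      apply mul_nonneg (hf_nonneg S)
      have := Real.exp_pos (-lam * Real.log (2 * S) ^ τ)
      have h1 : (0:ℝ) ≤ (2 * S) ^ (A - 1) := Real.rpow_nonneg h2Spos.le _
      have h2 : (0:ℝ) ≤ Real.log (2 * S) ^ k :=
        Real.rpow_nonneg (Real.log_nonneg (by nlinarith [hS16 j])) _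
      positivity
    have hpt : ∀ r ∈ I j, ENNReal.ofReal lb ≤
        ENNReal.ofReal (C' * f r * r ^ (A - 1) * Real.log r ^ k *
          Real.exp (-lam * Real.log r ^ τ)) := by
      intro r hr
      obtain ⟨hr1, hr2⟩ := hr
      apply ENNReal.ofReal_le_ofReal
      have hkey := annuli_key_ineq A k lam τ C hk hlam hτ hC.le S r (hS16 j) hr1 hr2
      have hrpos : (0 : ℝ) < r := by nlinarith [hS16 j]
      have hfSr : f S ≤ f r :=
        hf_anti (Set.mem_Ioi.2 hrpos) (Set.mem_Ioi.2 (hSpos j)) hr2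
      have hKnonneg : 0 ≤ 4 * C * (2 * S) ^ (A - 1) * Real.log (2 * S) ^ k *
          Real.exp (-lam * Real.log (2 * S) ^ τ) := by
        have h1 : (0:ℝ) ≤ (2 * S) ^ (A - 1) := Real.rpow_nonneg h2Spos.le _
        have h2 : (0:ℝ) ≤ Real.log (2 * S) ^ k :=
          Real.rpow_nonneg (Real.log_nonneg (by nlinarith [hS16 j])) _
        positivity
      calc lb = (4 * C * (2 * S) ^ (A - 1) * Real.log (2 * S) ^ k *
            Real.exp (-lam * Real.log (2 * S) ^ τ)) * f S := by rw [hlbdef]; ring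
        _ ≤ ((4 * C * (4 : ℝ) ^ |A - 1| * (2 : ℝ) ^ k) * r ^ (A - 1) *
            Real.log r ^ k * Real.exp (-lam * Real.log r ^ τ)) * f r :=
            mul_le_mul hkey hfSr (hf_nonneg S) (le_trans hKnonneg hkey)
        _ = C' * f r * r ^ (A - 1) * Real.log r ^ k *
            Real.exp (-lam * Real.log r ^ τ) := by rw [hC'def]; ring
    calc T j = ENNReal.ofReal lb * ENNReal.ofReal (S / 2) := by
          simp only [hTdef]
          rw [← ENNReal.ofReal_mul hlbnonneg]
          congr 1
          rw [hlbdef, h2SA]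
          ring
      _ = ENNReal.ofReal lb * volume (I j) := by
          simp only [hIdef, Real.volume_Ioc]
          congr 1
          rw [hSdef]
          ring
      _ = ∫⁻ _ in I j, ENNReal.ofReal lb := (setLIntegral_const _ _).symm
      _ ≤ ∫⁻ r in I j, ENNReal.ofReal (C' * f r * r ^ (A - 1) * Real.log r ^ k *
            Real.exp (-lam * Real.log r ^ τ)) := by
          apply lintegral_mono_ae
          rw [ae_restrict_iff' measurableSet_Ioc]
          exact Filter.Eventually.of_forall fun r hr => hpt r hr
  have hdisj : Pairwise (Function.onFun Disjoint I) := by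
    intro i j hij
    rcases hij.lt_or_gt with h | h
    · apply Set.Ioc_disjoint_Ioc.2
      simp only [min_le_iff, le_max_iff]
      right; left
      have : (2:ℝ) ^ i * 2 ≤ 2 ^ j := by
        rw [← pow_succ]
        exact pow_le_pow_right₀ (by norm_num) h
      nlinarith
    · apply Set.Ioc_disjoint_Ioc.2
      simp only [min_le_iff, le_max_iff]
      left; right
      have : (2:ℝ) ^ j * 2 ≤ 2 ^ i := by
        rw [← pow_succ]
        exact pow_le_pow_right₀ (by norm_num) h
      nlinarith
  have hIsub : (⋃ j, I j) ⊆ Set.Ioi (R / 2) := by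
    intro r hr
    obtain ⟨j, hj⟩ := Set.mem_iUnion.1 hr
    have h1 : R / 2 ≤ 2 ^ j * R / 2 := by
      have : (1:ℝ) ≤ 2 ^ j := one_le_pow₀ (by norm_num)
      nlinarith
    exact Set.mem_Ioi.2 (lt_of_le_of_lt h1 hj.1)
  have step2 : ∑' j, T j ≤ ∫⁻ r in Set.Ioi (R / 2),
      ENNReal.ofReal (C' * f r * r ^ (A - 1) * Real.log r ^ k *
        Real.exp (-lam * Real.log r ^ τ)) := by
    calc ∑' j, T j
        ≤ ∑' j, ∫⁻ r in I j, ENNReal.ofReal (C' * f r * r ^ (A - 1) * Real.log r ^ k *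
            Real.exp (-lam * Real.log r ^ τ)) := ENNReal.tsum_le_tsum hintbound
      _ = ∫⁻ r in ⋃ j, I j, ENNReal.ofReal (C' * f r * r ^ (A - 1) * Real.log r ^ k *
            Real.exp (-lam * Real.log r ^ τ)) :=
          (lintegral_iUnion (fun j => measurableSet_Ioc) hdisj _).symm
      _ ≤ ∫⁻ r in Set.Ioi (R / 2), ENNReal.ofReal (C' * f r * r ^ (A - 1) *
            Real.log r ^ k * Real.exp (-lam * Real.log r ^ τ)) :=
          lintegral_mono_set hIsub
  exact le_trans step1 step2
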